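/- Let a = (a_{ij}) be a real symmetric positive definite 2×2 matrix with determinant A = a₁₁a₂₂ − a₁₂² > 0, and write |μ⃗|_a² = a₁₁μ₁² + 2a₁₂μ₁μ₂ + a₂₂μ₂² + A|η|². Then the following integrability identities hold: (i) at every point with μ₁² + |η|² > 0, the partial derivative ∂α₁/∂μ₂ exists and equals √A/(2π|μ⃗|_a²); (ii) at every point with μ₂² + |η|² > 0, ∂α₂/∂μ₁ = √A/(2π|μ⃗|_a²); (iii) at every point with (μ₁−μ₂)² + |η|² > 0, −∂α₃/∂μ₁ − ∂α₃/∂μ₂ = √A/(2π|μ⃗|_a²). -/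

import Mathlib

lemma aux1 (y x k c Q t : ℝ) (hy : 0 < y) (hx : 0 < x) (hk : 0 < k) (hQ : 0 < Q)
    (hkey : y ^ 2 * x ^ 2 + (k * t + c) ^ 2 = k * Q) :
    HasDerivAt (fun s => (1 / (2 * x)) *
        (1 / 2 + (1 / Real.pi) * Real.arctan ((k * s + c) / (y * x))))
      (y / (2 * Real.pi * Q)) t := by
  have hπ := Real.pi_pos
  have hu : HasDerivAt (fun s => (k * s + c) / (y * x)) (k / (y * x)) t := by
    simpa using (((hasDerivAt_id t).const_mul k).add_const c).div_const (y * x)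
  have h := ((hu.arctan.const_mul (1 / Real.pi)).const_add (1 / 2)).const_mul (1 / (2 * x))
  refine h.congr_deriv ?_
  have h1 : 1 + ((k * t + c) / (y * x)) ^ 2 = k * Q / (y ^ 2 * x ^ 2) := by
    field_simp
    linear_combination hkey
  rw [h1]
  field_simp


lemma aux3 (y p q K Q μ1 μ2 : ℝ) (hy : 0 < y) (hpos : 0 < (μ1 - μ2) ^ 2 + K) (hQ : 0 < Q)
    (hpq : 0 < p + q)
    (hkey : y ^ 2 * ((μ1 - μ2) ^ 2 + K) + (p * μ1 + q * μ2) ^ 2 = (p + q) * Q) :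
    ∃ d1 d2 : ℝ,
      HasDerivAt (fun t => (1 / (2 * Real.sqrt ((t - μ2) ^ 2 + K))) *
        (1 / 2 + (1 / Real.pi) * Real.arctan (-(p * t + q * μ2) /
          (y * Real.sqrt ((t - μ2) ^ 2 + K))))) d1 μ1 ∧
      HasDerivAt (fun t => (1 / (2 * Real.sqrt ((μ1 - t) ^ 2 + K))) *
        (1 / 2 + (1 / Real.pi) * Real.arctan (-(p * μ1 + q * t) /
          (y * Real.sqrt ((μ1 - t) ^ 2 + K))))) d2 μ2 ∧
      -d1 - d2 = y / (2 * Real.pi * Q) := by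
  have hπ := Real.pi_pos
  have hr : 0 < Real.sqrt ((μ1 - μ2) ^ 2 + K) := Real.sqrt_pos.mpr hpos
  set R := Real.sqrt ((μ1 - μ2) ^ 2 + K) with hRdef
  have hR2 : R ^ 2 = (μ1 - μ2) ^ 2 + K := Real.sq_sqrt hpos.le
  -- derivative in μ1
  have hg1 : HasDerivAt (fun t => (t - μ2) ^ 2 + K) (2 * (μ1 - μ2)) μ1 := by
    simpa using (((hasDerivAt_id μ1).sub_const μ2).pow 2).add_const K
  have hR1 : HasDerivAt (fun t => Real.sqrt ((t - μ2) ^ 2 + K)) ((μ1 - μ2) / R) μ1 := by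
    have h := hg1.sqrt (ne_of_gt hpos)
    convert h using 1
    rw [mul_div_mul_left _ _ (two_ne_zero (α := ℝ))]
  have hc1 : HasDerivAt (fun t => 1 / (2 * Real.sqrt ((t - μ2) ^ 2 + K)))
      (-(μ1 - μ2) / (2 * R * R * R)) μ1 := by
    have h := (hasDerivAt_const μ1 (1:ℝ)).div (hR1.const_mul 2) (by positivity)
    refine h.congr_deriv ?_
    field_simp
    ring
  have hv1 : HasDerivAt (fun t => -(p * t + q * μ2)) (-p) μ1 := by
    exact (((hasDerivAt_id μ1).const_mul p).add_const (q * μ2)).neg.congr_deriv (by ring)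
  have hu1 : HasDerivAt (fun t => -(p * t + q * μ2) / (y * Real.sqrt ((t - μ2) ^ 2 + K)))
      ((-p * (R * R) + (p * μ1 + q * μ2) * (μ1 - μ2)) / (y * (R * R * R))) μ1 := by
    have h := hv1.div (hR1.const_mul y) (by positivity)
    refine h.congr_deriv ?_
    field_simp
    ring
  have hp1 := (hu1.arctan.const_mul (1 / Real.pi)).const_add (1 / 2)
  have hd1 := hc1.mul hp1
  -- derivative in μ2
  have hg2 : HasDerivAt (fun t => (μ1 - t) ^ 2 + K) (-(2 * (μ1 - μ2))) μ2 := by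
    have := (((hasDerivAt_id μ2).const_sub μ1).pow 2).add_const K
    simpa using this
  have hR2' : HasDerivAt (fun t => Real.sqrt ((μ1 - t) ^ 2 + K)) (-((μ1 - μ2) / R)) μ2 := by
    have h := hg2.sqrt (ne_of_gt hpos)
    convert h using 1
    rw [← hRdef, neg_div, mul_div_mul_left _ _ (two_ne_zero (α := ℝ))]
  have hc2 : HasDerivAt (fun t => 1 / (2 * Real.sqrt ((μ1 - t) ^ 2 + K)))
      ((μ1 - μ2) / (2 * R * R * R)) μ2 := by
    have h := (hasDerivAt_const μ2 (1:ℝ)).div (hR2'.const_mul 2) (by positivity)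
    refine h.congr_deriv ?_
    field_simp
    ring
  have hv2 : HasDerivAt (fun t => -(p * μ1 + q * t)) (-q) μ2 := by
    exact (((hasDerivAt_id μ2).const_mul q).const_add (p * μ1)).neg.congr_deriv (by ring)
  have hu2 : HasDerivAt (fun t => -(p * μ1 + q * t) / (y * Real.sqrt ((μ1 - t) ^ 2 + K)))
      ((-q * (R * R) - (p * μ1 + q * μ2) * (μ1 - μ2)) / (y * (R * R * R))) μ2 := by
    have h := hv2.div (hR2'.const_mul y) (by positivity)
    refine h.congr_deriv ?_
    field_simp
    ring
  have hp2 := (hu2.arctan.const_mul (1 / Real.pi)).const_add (1 / 2)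
  have hd2 := hc2.mul hp2
  refine ⟨_, _, hd1, hd2, ?_⟩
  have h1 : 1 + (-(p * μ1 + q * μ2) / (y * R)) ^ 2 = (p + q) * Q / (y ^ 2 * R ^ 2) := by
    field_simp
    linear_combination hkey + y ^ 2 * hR2
  rw [← hRdef, h1]
  field_simp
  ring


/-- The function `α₁` of the paper. -/
noncomputable def alpha1 (a11 a12 a22 μ1 μ2 : ℝ) (η : ℂ) : ℝ :=
  (1 / (2 * Real.sqrt (μ1 ^ 2 + a22 * Complex.normSq η))) *
    (1 / 2 + (1 / Real.pi) * Real.arctan ((a22 * μ2 + a12 * μ1) /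
      (Real.sqrt (a11 * a22 - a12 ^ 2) * Real.sqrt (μ1 ^ 2 + a22 * Complex.normSq η))))

/-- The function `α₂` of the paper. -/
noncomputable def alpha2 (a11 a12 a22 μ1 μ2 : ℝ) (η : ℂ) : ℝ :=
  (1 / (2 * Real.sqrt (μ2 ^ 2 + a11 * Complex.normSq η))) *
    (1 / 2 + (1 / Real.pi) * Real.arctan ((a11 * μ1 + a12 * μ2) /
      (Real.sqrt (a11 * a22 - a12 ^ 2) * Real.sqrt (μ2 ^ 2 + a11 * Complex.normSq η))))

/-- The function `α₃` of the paper. -/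
noncomputable def alpha3 (a11 a12 a22 μ1 μ2 : ℝ) (η : ℂ) : ℝ :=
  (1 / (2 * Real.sqrt ((μ1 - μ2) ^ 2 + (a11 + 2 * a12 + a22) * Complex.normSq η))) *
    (1 / 2 + (1 / Real.pi) * Real.arctan (-((a11 + a12) * μ1 + (a12 + a22) * μ2) /
      (Real.sqrt (a11 * a22 - a12 ^ 2) *
        Real.sqrt ((μ1 - μ2) ^ 2 + (a11 + 2 * a12 + a22) * Complex.normSq η))))

/-- the integrability identities `∂α₁/∂μ₂ = ∂α₂/∂μ₁ = −∂α₃/∂μ₁ − ∂α₃/∂μ₂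
  = √A/(2π|μ⃗|_a²)` away from the respective singular rays. -/
theorem statement2 (a11 a12 a22 : ℝ) (ha11 : 0 < a11) (hA : 0 < a11 * a22 - a12 ^ 2)
    (μ1 μ2 : ℝ) (η : ℂ) :
    (0 < μ1 ^ 2 + Complex.normSq η →
      HasDerivAt (fun t => alpha1 a11 a12 a22 μ1 t η)
        (Real.sqrt (a11 * a22 - a12 ^ 2) /
          (2 * Real.pi * (a11 * μ1 ^ 2 + 2 * a12 * μ1 * μ2 + a22 * μ2 ^ 2
            + (a11 * a22 - a12 ^ 2) * Complex.normSq η))) μ2) ∧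
    (0 < μ2 ^ 2 + Complex.normSq η →
      HasDerivAt (fun t => alpha2 a11 a12 a22 t μ2 η)
        (Real.sqrt (a11 * a22 - a12 ^ 2) /
          (2 * Real.pi * (a11 * μ1 ^ 2 + 2 * a12 * μ1 * μ2 + a22 * μ2 ^ 2
            + (a11 * a22 - a12 ^ 2) * Complex.normSq η))) μ1) ∧
    (0 < (μ1 - μ2) ^ 2 + Complex.normSq η →
      ∃ d1 d2 : ℝ,
        HasDerivAt (fun t => alpha3 a11 a12 a22 t μ2 η) d1 μ1 ∧
        HasDerivAt (fun t => alpha3 a11 a12 a22 μ1 t η) d2 μ2 ∧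
        -d1 - d2 = Real.sqrt (a11 * a22 - a12 ^ 2) /
          (2 * Real.pi * (a11 * μ1 ^ 2 + 2 * a12 * μ1 * μ2 + a22 * μ2 ^ 2
            + (a11 * a22 - a12 ^ 2) * Complex.normSq η))) := by
  have hn := Complex.normSq_nonneg η
  have ha22 : 0 < a22 := by nlinarith [sq_nonneg a12]
  have hb : 0 < a11 + 2 * a12 + a22 := by nlinarith [sq_nonneg (a11 + a12)]
  refine ⟨fun hpos => ?_, fun hpos => ?_, fun hpos => ?_⟩
  · have hS : 0 < μ1 ^ 2 + a22 * Complex.normSq η := by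
      nlinarith [sq_nonneg μ1, mul_nonneg ha22.le hn, mul_pos ha22 hpos]
    have hQ : 0 < a11 * μ1 ^ 2 + 2 * a12 * μ1 * μ2 + a22 * μ2 ^ 2
        + (a11 * a22 - a12 ^ 2) * Complex.normSq η := by
      nlinarith [mul_pos hA hS, sq_nonneg (a22 * μ2 + a12 * μ1)]
    exact aux1 (Real.sqrt (a11 * a22 - a12 ^ 2))
      (Real.sqrt (μ1 ^ 2 + a22 * Complex.normSq η)) a22 (a12 * μ1) _ μ2
      (Real.sqrt_pos.mpr hA) (Real.sqrt_pos.mpr hS) ha22 hQ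
      (by rw [Real.sq_sqrt hA.le, Real.sq_sqrt hS.le]; ring)
  · have hS : 0 < μ2 ^ 2 + a11 * Complex.normSq η := by
      nlinarith [sq_nonneg μ2, mul_nonneg ha11.le hn, mul_pos ha11 hpos]
    have hQ : 0 < a11 * μ1 ^ 2 + 2 * a12 * μ1 * μ2 + a22 * μ2 ^ 2
        + (a11 * a22 - a12 ^ 2) * Complex.normSq η := by
      nlinarith [mul_pos hA hS, sq_nonneg (a11 * μ1 + a12 * μ2)]
    exact aux1 (Real.sqrt (a11 * a22 - a12 ^ 2))
      (Real.sqrt (μ2 ^ 2 + a11 * Complex.normSq η)) a11 (a12 * μ2) _ μ1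
      (Real.sqrt_pos.mpr hA) (Real.sqrt_pos.mpr hS) ha11 hQ
      (by rw [Real.sq_sqrt hA.le, Real.sq_sqrt hS.le]; ring)
  · have hK : 0 < (μ1 - μ2) ^ 2 + (a11 + 2 * a12 + a22) * Complex.normSq η := by
      nlinarith [sq_nonneg (μ1 - μ2), mul_nonneg hb.le hn, mul_pos hb hpos]
    have hQ : 0 < a11 * μ1 ^ 2 + 2 * a12 * μ1 * μ2 + a22 * μ2 ^ 2
        + (a11 * a22 - a12 ^ 2) * Complex.normSq η := by
      nlinarith [mul_pos hA hK, sq_nonneg ((a11 + a12) * μ1 + (a12 + a22) * μ2)]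
    exact aux3 (Real.sqrt (a11 * a22 - a12 ^ 2)) (a11 + a12) (a12 + a22)
      ((a11 + 2 * a12 + a22) * Complex.normSq η) _ μ1 μ2
      (Real.sqrt_pos.mpr hA) hK hQ (by linarith)
      (by rw [Real.sq_sqrt hA.le]; ring)
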